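/- Let Q₁, Q₂ : Finset Ω → ℝ be commonality functions of two mass functions on a finite set Ω, with Q₂(A) ≠ 0 for all A. Then there exists a unique mass function m₁₂ (possibly with negative values) whose commonality function Q₁₂ satisfies Q₁₂(A) = Q₁(A)/Q₂(A) for all A ⊆ Ω; i.e., the decombination of pseudo-belief functions always exists. -/

import Mathlib

open Finset

/-- Commonality function of a (pseudo-)mass function. -/
def commonality {Ω : Type*} [Fintype Ω] [DecidableEq Ω]
    (m : Finset Ω → ℝ) (A : Finset Ω) : ℝ :=
  ∑ B ∈ Finset.univ.filter (fun B => A ⊆ B), m B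

lemma real_powerset_sum {α : Type*} [DecidableEq α] (x : Finset α) :
    (∑ m ∈ x.powerset, (-1 : ℝ) ^ m.card) = if x = ∅ then 1 else 0 := by
  have h := Finset.sum_powerset_neg_one_pow_card (x := x)
  have h2 : ((∑ m ∈ x.powerset, (-1 : ℤ) ^ m.card : ℤ) : ℝ)
      = ((if x = ∅ then 1 else 0 : ℤ) : ℝ) := by exact_mod_cast h
  push_cast at h2
  simpa using h2

lemma inner1 {Ω : Type*} [Fintype Ω] [DecidableEq Ω] (A C : Finset Ω) (h : A ⊆ C) :
    ∑ B ∈ Finset.univ.filter (fun B => A ⊆ B ∧ B ⊆ C), (-1:ℝ)^(B.card - A.card)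
      = if A = C then 1 else 0 := by
  rw [show (Finset.univ.filter (fun B => A ⊆ B ∧ B ⊆ C)) = (C \ A).powerset.image (fun S => A ∪ S) from ?_]
  · rw [Finset.sum_image ?_]
    · have : ∀ S ∈ (C \ A).powerset, (-1:ℝ)^((A ∪ S).card - A.card) = (-1:ℝ)^S.card := by
        intro S hS
        rw [Finset.mem_powerset] at hS
        have hdisj : Disjoint A S := by
          refine Finset.disjoint_left.mpr fun a ha haS => ?_
          exact (Finset.mem_sdiff.mp (hS haS)).2 ha
        rw [Finset.card_union_of_disjoint hdisj]
        simp
      rw [Finset.sum_congr rfl this, real_powerset_sum]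
      have heq : (C \ A = ∅) ↔ (A = C) := by
        rw [Finset.sdiff_eq_empty_iff_subset]
        exact ⟨fun hh => (Finset.Subset.antisymm h hh), fun hh => hh ▸ Finset.Subset.refl _⟩
      simp only [heq]
    · intro S hS T hT hST
      rw [Finset.mem_coe, Finset.mem_powerset] at hS hT
      have : ∀ {X : Finset Ω}, X ⊆ C \ A → (A ∪ X) \ A = X := by
        intro X hX
        rw [Finset.union_sdiff_left]
        exact Finset.sdiff_eq_self_of_disjoint (Finset.disjoint_left.mpr
          fun a ha => (Finset.mem_sdiff.mp (hX ha)).2)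
      rw [← this hS, ← this hT, show A ∪ S = A ∪ T from hST]
  · ext B
    simp only [Finset.mem_filter, Finset.mem_univ, true_and, Finset.mem_image,
      Finset.mem_powerset]
    constructor
    · rintro ⟨hAB, hBC⟩
      exact ⟨B \ A, Finset.sdiff_subset_sdiff hBC (Finset.Subset.refl _),
        by rw [Finset.union_sdiff_of_subset hAB]⟩
    · rintro ⟨S, hS, rfl⟩
      exact ⟨Finset.subset_union_left, Finset.union_subset h
        (hS.trans Finset.sdiff_subset)⟩

lemma inner2 {Ω : Type*} [Fintype Ω] [DecidableEq Ω] (A C : Finset Ω) (h : A ⊆ C) :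
    ∑ B ∈ Finset.univ.filter (fun B => A ⊆ B ∧ B ⊆ C), (-1:ℝ)^(C.card - B.card)
      = if A = C then 1 else 0 := by
  have key : ∑ B ∈ Finset.univ.filter (fun B => A ⊆ B ∧ B ⊆ C), (-1:ℝ)^(C.card - B.card)
      = (-1:ℝ)^(C.card - A.card) *
        ∑ B ∈ Finset.univ.filter (fun B => A ⊆ B ∧ B ⊆ C), (-1:ℝ)^(B.card - A.card) := by
    rw [Finset.mul_sum]
    refine Finset.sum_congr rfl fun B hB => ?_
    simp only [Finset.mem_filter, Finset.mem_univ, true_and] at hB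
    obtain ⟨hAB, hBC⟩ := hB
    have h1 : A.card ≤ B.card := Finset.card_le_card hAB
    have h2 : B.card ≤ C.card := Finset.card_le_card hBC
    have hsum : C.card - B.card + (B.card - A.card) = C.card - A.card := by omega
    rw [← hsum, pow_add, mul_assoc, ← pow_add, Even.neg_one_pow ⟨_, rfl⟩, mul_one]
  rw [key, inner1 A C h]
  by_cases hAC : A = C
  · simp [hAC]
  · simp [hAC]

noncomputable def invQ {Ω : Type*} [Fintype Ω] [DecidableEq Ω]
    (f : Finset Ω → ℝ) (A : Finset Ω) : ℝ :=
  ∑ B ∈ Finset.univ.filter (fun B => A ⊆ B), (-1:ℝ)^(B.card - A.card) * f B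

lemma commonality_invQ {Ω : Type*} [Fintype Ω] [DecidableEq Ω]
    (f : Finset Ω → ℝ) (A : Finset Ω) : commonality (invQ f) A = f A := by
  unfold commonality invQ
  have step1 : ∀ B : Finset Ω,
      (if A ⊆ B then (∑ C ∈ Finset.univ, if B ⊆ C then (-1:ℝ)^(C.card - B.card) * f C else 0) else 0)
      = ∑ C ∈ Finset.univ, if A ⊆ B ∧ B ⊆ C then (-1:ℝ)^(C.card - B.card) * f C else 0 := by
    intro B; by_cases h : A ⊆ B <;> simp [h]
  calc ∑ B ∈ Finset.univ.filter (fun B => A ⊆ B),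
        ∑ C ∈ Finset.univ.filter (fun C => B ⊆ C), (-1:ℝ)^(C.card - B.card) * f C
      = ∑ B ∈ Finset.univ, if A ⊆ B then
          (∑ C ∈ Finset.univ, if B ⊆ C then (-1:ℝ)^(C.card - B.card) * f C else 0) else 0 := by
        simp only [Finset.sum_filter]
    _ = ∑ B ∈ (Finset.univ : Finset (Finset Ω)), ∑ C ∈ Finset.univ,
          if A ⊆ B ∧ B ⊆ C then (-1:ℝ)^(C.card - B.card) * f C else 0 :=
        Finset.sum_congr rfl fun B _ => step1 B
    _ = ∑ C ∈ (Finset.univ : Finset (Finset Ω)), ∑ B ∈ Finset.univ,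
          if A ⊆ B ∧ B ⊆ C then (-1:ℝ)^(C.card - B.card) * f C else 0 := Finset.sum_comm
    _ = ∑ C ∈ (Finset.univ : Finset (Finset Ω)), if A = C then f C else 0 := by
        refine Finset.sum_congr rfl fun C _ => ?_
        rw [← Finset.sum_filter, ← Finset.sum_mul]
        by_cases hAC : A ⊆ C
        · rw [inner2 A C hAC]
          by_cases h : A = C <;> simp [h]
        · have hemp : Finset.univ.filter (fun B => A ⊆ B ∧ B ⊆ C) = ∅ := by
            ext B
            simp only [Finset.mem_filter, Finset.mem_univ, true_and,
              Finset.notMem_empty, iff_false]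
            rintro ⟨h1, h2⟩; exact hAC (h1.trans h2)
          rw [hemp]
          simp [show A ≠ C from fun h => hAC (h ▸ Finset.Subset.refl _)]
    _ = f A := by simp

lemma invQ_commonality {Ω : Type*} [Fintype Ω] [DecidableEq Ω]
    (m : Finset Ω → ℝ) (A : Finset Ω) : invQ (commonality m) A = m A := by
  unfold commonality invQ
  have step1 : ∀ B : Finset Ω,
      (if A ⊆ B then ((-1:ℝ)^(B.card - A.card) *
        ∑ C ∈ Finset.univ, if B ⊆ C then m C else 0) else 0)
      = ∑ C ∈ Finset.univ, if A ⊆ B ∧ B ⊆ C then (-1:ℝ)^(B.card - A.card) * m C else 0 := by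
    intro B; by_cases h : A ⊆ B <;> simp [h, Finset.mul_sum, Finset.sum_ite_eq, mul_ite]
  calc ∑ B ∈ Finset.univ.filter (fun B => A ⊆ B),
        (-1:ℝ)^(B.card - A.card) * ∑ C ∈ Finset.univ.filter (fun C => B ⊆ C), m C
      = ∑ B ∈ Finset.univ, if A ⊆ B then ((-1:ℝ)^(B.card - A.card) *
          ∑ C ∈ Finset.univ, if B ⊆ C then m C else 0) else 0 := by
        simp only [Finset.sum_filter]
    _ = ∑ B ∈ (Finset.univ : Finset (Finset Ω)), ∑ C ∈ Finset.univ,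
          if A ⊆ B ∧ B ⊆ C then (-1:ℝ)^(B.card - A.card) * m C else 0 :=
        Finset.sum_congr rfl fun B _ => step1 B
    _ = ∑ C ∈ (Finset.univ : Finset (Finset Ω)), ∑ B ∈ Finset.univ,
          if A ⊆ B ∧ B ⊆ C then (-1:ℝ)^(B.card - A.card) * m C else 0 := Finset.sum_comm
    _ = ∑ C ∈ (Finset.univ : Finset (Finset Ω)), if A = C then m C else 0 := by
        refine Finset.sum_congr rfl fun C _ => ?_
        rw [← Finset.sum_filter, ← Finset.sum_mul]
        by_cases hAC : A ⊆ C
        · rw [inner1 A C hAC]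
          by_cases h : A = C <;> simp [h]
        · have hemp : Finset.univ.filter (fun B => A ⊆ B ∧ B ⊆ C) = ∅ := by
            ext B
            simp only [Finset.mem_filter, Finset.mem_univ, true_and,
              Finset.notMem_empty, iff_false]
            rintro ⟨h1, h2⟩; exact hAC (h1.trans h2)
          rw [hemp]
          simp [show A ≠ C from fun h => hAC (h ▸ Finset.Subset.refl _)]
    _ = m A := by simp

/-- Decombination always exists and is unique among pseudo-mass functions:
there is a unique mass function whose commonality is the pointwise quotient
of the given commonalities. -/
theorem decombination_exists_unique {Ω : Type*} [Fintype Ω] [DecidableEq Ω]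
    (m₁ m₂ : Finset Ω → ℝ) (h₂ : ∀ A : Finset Ω, commonality m₂ A ≠ 0) :
    ∃! m₁₂ : Finset Ω → ℝ,
      ∀ A : Finset Ω, commonality m₁₂ A = commonality m₁ A / commonality m₂ A := by
  refine ⟨invQ (fun A => commonality m₁ A / commonality m₂ A),
    fun A => commonality_invQ _ A, ?_⟩
  intro m hm
  funext A
  rw [← invQ_commonality m A]
  unfold invQ
  exact Finset.sum_congr rfl fun B _ => by rw [hm B]
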